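/- Let ℓ be a prime, V a finite-dimensional vector space over F_ℓ, f : V → (1/ℓ)Z/Z a function such that the associated form B(v, w) = f(v + w) − f(v) − f(w) is bilinear, and suppose B is nondegenerate on some subspace V_0 ⊆ V of dimension b. Then for every group homomorphism ψ : V → C^× we have |Σ_{v ∈ V} ψ(v) exp(2πi f(v))| ≤ ℓ^{−b/2} · |V|. -/

import Mathlib

/-- The standard additive character of `(1/ℓ)ℤ/ℤ ≅ ZMod ℓ`, `t ↦ exp(2πi t/ℓ)`. -/
noncomputable def stdChar (ℓ : ℕ) (t : ZMod ℓ) : ℂ :=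
  Complex.exp (2 * Real.pi * Complex.I * (t.val : ℂ) / (ℓ : ℂ))

/-- The associated form `B(v, w) = f(v + w) − f(v) − f(w)`. -/
def assocForm {ℓ : ℕ} {V : Type*} [AddCommGroup V] (f : V → ZMod ℓ) (v w : V) : ZMod ℓ :=
  f (v + w) - f v - f w

lemma stdChar_zero (ℓ : ℕ) [NeZero ℓ] : stdChar ℓ 0 = 1 := by
  simp [stdChar]

lemma stdChar_add {ℓ : ℕ} [NeZero ℓ] (a b : ZMod ℓ) :
    stdChar ℓ (a + b) = stdChar ℓ a * stdChar ℓ b := by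
  have hℓ : (ℓ : ℂ) ≠ 0 := Nat.cast_ne_zero.mpr (NeZero.ne ℓ)
  rw [stdChar, stdChar, stdChar, ← Complex.exp_add, Complex.exp_eq_exp_iff_exists_int]
  refine ⟨-(((a.val + b.val) / ℓ : ℕ) : ℤ), ?_⟩
  have hv : ((a + b).val : ℂ) + (ℓ : ℂ) * (((a.val + b.val) / ℓ : ℕ) : ℂ)
      = (a.val : ℂ) + (b.val : ℂ) := by
    rw [ZMod.val_add]
    exact_mod_cast congrArg (Nat.cast : ℕ → ℂ) (Nat.mod_add_div (a.val + b.val) ℓ)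
  rw [Int.cast_neg, Int.cast_natCast]
  rw [div_eq_mul_inv, div_eq_mul_inv, div_eq_mul_inv]
  linear_combination (2 * (Real.pi : ℂ) * Complex.I * (ℓ : ℂ)⁻¹) * hv
    - (2 * (Real.pi : ℂ) * Complex.I * (((a.val + b.val) / ℓ : ℕ) : ℂ)) * (mul_inv_cancel₀ hℓ)

lemma stdChar_abs {ℓ : ℕ} (t : ZMod ℓ) : ‖stdChar ℓ t‖ = 1 := by
  have : stdChar ℓ t = Complex.exp (((2 * Real.pi * (t.val : ℝ) / (ℓ : ℝ) : ℝ) : ℂ) * Complex.I) := by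
    rw [stdChar]; push_cast; ring_nf
  rw [this, Complex.norm_exp_ofReal_mul_I]

lemma stdChar_ne_zero {ℓ : ℕ} (t : ZMod ℓ) : stdChar ℓ t ≠ 0 := Complex.exp_ne_zero _

lemma stdChar_eq_one_iff {ℓ : ℕ} [NeZero ℓ] (t : ZMod ℓ) : stdChar ℓ t = 1 ↔ t = 0 := by
  constructor
  · intro h
    rw [stdChar, Complex.exp_eq_one_iff] at h
    obtain ⟨n, hn⟩ := h
    have hℓ : (ℓ : ℂ) ≠ 0 := Nat.cast_ne_zero.mpr (NeZero.ne ℓ)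
    have hpi : (2 * (Real.pi : ℂ) * Complex.I) ≠ 0 := by
      refine mul_ne_zero (mul_ne_zero two_ne_zero ?_) Complex.I_ne_zero
      exact_mod_cast Complex.ofReal_ne_zero.mpr Real.pi_ne_zero
    rw [div_eq_mul_inv] at hn
    have h3 : 2 * (Real.pi : ℂ) * Complex.I * (t.val : ℂ)
        = 2 * (Real.pi : ℂ) * Complex.I * ((n : ℂ) * ℓ) := by
      linear_combination (ℓ : ℂ) * hn
        - (2 * (Real.pi : ℂ) * Complex.I * (t.val : ℂ)) * (mul_inv_cancel₀ hℓ)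
    have h4 : (t.val : ℂ) = (n : ℂ) * ℓ := mul_left_cancel₀ hpi h3
    have h5 : (t.val : ℤ) = n * ℓ := by exact_mod_cast h4
    have h7 : ℓ ∣ t.val := by
      have h6 : (ℓ : ℤ) ∣ (t.val : ℤ) := ⟨n, by linarith⟩
      exact_mod_cast h6
    exact (ZMod.val_eq_zero t).mp (Nat.eq_zero_of_dvd_of_lt h7 (ZMod.val_lt t))
  · rintro rfl; exact stdChar_zero ℓ

/-- Gauss-sum bound: if `f : V → (1/ℓ)ℤ/ℤ` has biadditive associated form `B`, which is
nondegenerate on a subspace `V₀` of dimension `b`, then for every character `ψ` of `V`,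
`|Σ_{v ∈ V} ψ(v) e(f(v))| ≤ ℓ^{−b/2} |V|`. -/
theorem stmt_8 (ℓ : ℕ) [Fact (Nat.Prime ℓ)] (V : Type*) [AddCommGroup V]
    [Module (ZMod ℓ) V] [Fintype V] (f : V → ZMod ℓ)
    (hBadd : ∀ v w₁ w₂ : V,
      assocForm f v (w₁ + w₂) = assocForm f v w₁ + assocForm f v w₂)
    (hBadd' : ∀ v₁ v₂ w : V,
      assocForm f (v₁ + v₂) w = assocForm f v₁ w + assocForm f v₂ w)
    (V₀ : Submodule (ZMod ℓ) V) (b : ℕ) (hb : Module.finrank (ZMod ℓ) V₀ = b)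
    (hnd : ∀ v ∈ V₀, (∀ w ∈ V₀, assocForm f v w = 0) → v = 0)
    (ψ : V → ℂ) (hψ0 : ψ 0 = 1) (hψ : ∀ v w : V, ψ (v + w) = ψ v * ψ w) :
    ‖∑ v : V, ψ v * stdChar ℓ (f v)‖ ≤
      (ℓ : ℝ) ^ (-(b : ℝ) / 2) * (Fintype.card V : ℝ) := by
  classical
  have hp : ℓ.Prime := Fact.out
  haveI : NeZero ℓ := ⟨hp.pos.ne'⟩
  -- basic facts about the form
  have hB0 : ∀ w, assocForm f 0 w = 0 := by
    intro w
    have h := hBadd' 0 0 w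
    rw [add_zero] at h
    exact left_eq_add.mp h
  have hB0' : ∀ v, assocForm f v 0 = 0 := by
    intro v
    have h := hBadd v 0 0
    rw [add_zero] at h
    exact left_eq_add.mp h
  have hBsymm : ∀ v w, assocForm f v w = assocForm f w v := by
    intro v w; unfold assocForm; rw [add_comm w v]; ring
  -- character values have modulus 1
  have hψsmul : ∀ (n : ℕ) (v : V), ψ (n • v) = ψ v ^ n := by
    intro n v
    induction n with
    | zero => simpa using hψ0
    | succ n ih => rw [succ_nsmul, hψ, ih, pow_succ]
  have hψabs : ∀ v, ‖ψ v‖ = 1 := by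
    intro v
    have hc : ψ v ^ Fintype.card V = 1 := by
      rw [← hψsmul, card_nsmul_eq_zero, hψ0]
    have hc' : ‖ψ v‖ ^ Fintype.card V = 1 := by
      rw [← norm_pow, hc, norm_one]
    have hne : Fintype.card V ≠ 0 := Fintype.card_ne_zero
    rcases lt_trichotomy ‖ψ v‖ 1 with h | h | h
    · exact absurd hc' (by nlinarith [pow_lt_one₀ (norm_nonneg _) h hne])
    · exact h
    · exact absurd hc' (by nlinarith [one_lt_pow₀ h hne])
  have habs1 : ∀ v, ‖ψ v * stdChar ℓ (f v)‖ = 1 := by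
    intro v; rw [norm_mul, hψabs, stdChar_abs, one_mul]
  have hconj_g : ∀ w, (starRingEnd ℂ) (ψ w * stdChar ℓ (f w)) * (ψ w * stdChar ℓ (f w)) = 1 := by
    intro w
    rw [mul_comm, Complex.mul_conj']
    norm_cast
    rw [habs1, one_pow]
  -- the key single-term identity
  have step : ∀ w u : V,
      (starRingEnd ℂ) (ψ w * stdChar ℓ (f w)) * (ψ (w + u) * stdChar ℓ (f (w + u)))
      = (ψ u * stdChar ℓ (f u)) * stdChar ℓ (assocForm f u w) := by
    intro w u
    have hf : f (w + u) = assocForm f u w + (f u + f w) := by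
      rw [add_comm w u]; simp only [assocForm]; ring
    rw [hf, stdChar_add, stdChar_add, hψ]
    linear_combination (ψ u * stdChar ℓ (f u) * stdChar ℓ (assocForm f u w)) * hconj_g w
  set S : ℂ := ∑ v : V, ψ v * stdChar ℓ (f v) with hS
  -- the inner character sum
  have inner : ∀ u : V, (∑ w : V, stdChar ℓ (assocForm f u w))
      = if ∀ w, assocForm f u w = 0 then (Fintype.card V : ℂ) else 0 := by
    intro u
    let χ : AddChar V ℂ :=
      { toFun := fun w => stdChar ℓ (assocForm f u w)
        map_zero_eq_one' := by show stdChar ℓ (assocForm f u 0) = 1; rw [hB0' u, stdChar_zero]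
        map_add_eq_mul' := fun a c => by
          show stdChar ℓ (assocForm f u (a + c)) = stdChar ℓ (assocForm f u a) * stdChar ℓ (assocForm f u c)
          rw [hBadd, stdChar_add] }
    have hχ : ∀ w, χ w = stdChar ℓ (assocForm f u w) := fun w => rfl
    by_cases h : ∀ w, assocForm f u w = 0
    · rw [if_pos h]
      have : χ = 1 := by
        ext w
        rw [hχ, h w, stdChar_zero, AddChar.one_apply]
      calc (∑ w : V, stdChar ℓ (assocForm f u w)) = ∑ w : V, χ w := by
            exact Finset.sum_congr rfl fun w _ => (hχ w).symm
        _ = Fintype.card V := AddChar.sum_eq_card_of_eq_one this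
    · rw [if_neg h]
      push_neg at h
      obtain ⟨w₀, hw₀⟩ := h
      have hne : χ ≠ 1 := by
        rw [AddChar.ne_one_iff]
        exact ⟨w₀, by rw [hχ]; exact fun hc => hw₀ ((stdChar_eq_one_iff _).mp hc)⟩
      calc (∑ w : V, stdChar ℓ (assocForm f u w)) = ∑ w : V, χ w := by
            exact Finset.sum_congr rfl fun w _ => (hχ w).symm
        _ = 0 := AddChar.sum_eq_zero_of_ne_one hne
  -- main double-sum identity
  have key : (starRingEnd ℂ) S * S
      = ∑ u : V, (ψ u * stdChar ℓ (f u)) * ∑ w : V, stdChar ℓ (assocForm f u w) := by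
    calc (starRingEnd ℂ) S * S
        = ∑ w : V, ∑ v : V,
            (starRingEnd ℂ) (ψ w * stdChar ℓ (f w)) * (ψ v * stdChar ℓ (f v)) := by
          rw [hS, map_sum, Finset.sum_mul]
          exact Finset.sum_congr rfl fun w _ => Finset.mul_sum _ _ _
      _ = ∑ w : V, ∑ u : V,
            (starRingEnd ℂ) (ψ w * stdChar ℓ (f w)) * (ψ (w + u) * stdChar ℓ (f (w + u))) := by
          refine Finset.sum_congr rfl fun w _ => ?_
          exact (Fintype.sum_equiv (Equiv.addLeft w)
            (fun u => (starRingEnd ℂ) (ψ w * stdChar ℓ (f w)) * (ψ (w + u) * stdChar ℓ (f (w + u))))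
            (fun v => (starRingEnd ℂ) (ψ w * stdChar ℓ (f w)) * (ψ v * stdChar ℓ (f v)))
            (fun u => rfl)).symm
      _ = ∑ w : V, ∑ u : V, (ψ u * stdChar ℓ (f u)) * stdChar ℓ (assocForm f u w) :=
          Finset.sum_congr rfl fun w _ => Finset.sum_congr rfl fun u _ => step w u
      _ = ∑ u : V, ∑ w : V, (ψ u * stdChar ℓ (f u)) * stdChar ℓ (assocForm f u w) :=
          Finset.sum_comm
      _ = _ := Finset.sum_congr rfl fun u _ => (Finset.mul_sum _ _ _).symm
  set P : V → Prop := fun u => ∀ w, assocForm f u w = 0 with hP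
  set K : Finset V := Finset.univ.filter P with hK
  have key2 : (starRingEnd ℂ) S * S
      = (Fintype.card V : ℂ) * ∑ u ∈ K, (ψ u * stdChar ℓ (f u)) := by
    rw [key]
    calc (∑ u : V, (ψ u * stdChar ℓ (f u)) * ∑ w : V, stdChar ℓ (assocForm f u w))
        = ∑ u : V, (if P u then (Fintype.card V : ℂ) * (ψ u * stdChar ℓ (f u)) else 0) := by
          refine Finset.sum_congr rfl fun u _ => ?_
          rw [inner u]
          by_cases h : P u
          · rw [if_pos h, if_pos h]; ring
          · rw [if_neg h, if_neg h]; ring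
      _ = ∑ u ∈ K, (Fintype.card V : ℂ) * (ψ u * stdChar ℓ (f u)) :=
          (Finset.sum_filter _ _).symm
      _ = _ := by rw [← Finset.mul_sum]
  -- |S|² = card V * |∑_{u ∈ K} …| ≤ card V * card K
  have habsS : ‖S‖ ^ 2
      = (Fintype.card V : ℝ) * ‖∑ u ∈ K, (ψ u * stdChar ℓ (f u))‖ := by
    have h1 : ‖(starRingEnd ℂ) S * S‖ = ‖S‖ ^ 2 := by
      rw [norm_mul, Complex.norm_conj]; ring
    rw [← h1, key2, norm_mul, Complex.norm_natCast]
  have hsum_le : ‖∑ u ∈ K, (ψ u * stdChar ℓ (f u))‖ ≤ (K.card : ℝ) := by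
    calc ‖∑ u ∈ K, (ψ u * stdChar ℓ (f u))‖
        ≤ ∑ u ∈ K, ‖ψ u * stdChar ℓ (f u)‖ := norm_sum_le _ _
      _ = ∑ u ∈ K, (1 : ℝ) := Finset.sum_congr rfl fun u _ => habs1 u
      _ = K.card := by rw [Finset.sum_const, nsmul_eq_mul, mul_one]
  -- K is (the finset of) a submodule disjoint from V₀
  have hnsmulK : ∀ (n : ℕ) (u : V), P u → P (n • u) := by
    intro n u hu
    induction n with
    | zero => intro w; rw [zero_smul]; exact hB0 w
    | succ n ih => intro w; rw [succ_nsmul, hBadd', ih w, hu w, add_zero]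
  let Ksub : Submodule (ZMod ℓ) V :=
    { carrier := {u | P u}
      add_mem' := fun {x y} hx hy w => by rw [hBadd', hx w, hy w, add_zero]
      zero_mem' := hB0
      smul_mem' := fun c u hu => by
        have : c • u = c.val • u := by rw [← Nat.cast_smul_eq_nsmul (ZMod ℓ), ZMod.natCast_val, ZMod.cast_id]
        rw [this]
        exact hnsmulK c.val u hu }
  have hKcardsub : K.card = Fintype.card Ksub := by
    rw [hK, ← Fintype.card_subtype]
    exact Fintype.card_congr (Equiv.subtypeEquivRight fun x => Iff.rfl)
  have hdisj : Ksub ⊓ V₀ = ⊥ := by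
    rw [eq_bot_iff]
    rintro x ⟨hx1, hx2⟩
    have : x = 0 := hnd x hx2 (fun w _ => hx1 w)
    simp [this]
  haveI : FiniteDimensional (ZMod ℓ) V := Module.Finite.of_finite
  have hrank : Module.finrank (ZMod ℓ) Ksub + b ≤ Module.finrank (ZMod ℓ) V := by
    have h1 := Submodule.finrank_sup_add_finrank_inf_eq Ksub V₀
    rw [hdisj] at h1
    simp only [finrank_bot, add_zero] at h1
    rw [← hb, ← h1]
    exact Submodule.finrank_le _
  have hcardK : Fintype.card Ksub = ℓ ^ Module.finrank (ZMod ℓ) Ksub := by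
    rw [Module.card_eq_pow_finrank (K := ZMod ℓ), ZMod.card]
  have hcardV : Fintype.card V = ℓ ^ Module.finrank (ZMod ℓ) V := by
    rw [Module.card_eq_pow_finrank (K := ZMod ℓ), ZMod.card]
  have hKbound : K.card * ℓ ^ b ≤ Fintype.card V := by
    rw [hKcardsub, hcardK, hcardV, ← pow_add]
    exact Nat.pow_le_pow_right hp.one_lt.le hrank
  -- final real arithmetic
  have hℓpos : (0 : ℝ) < (ℓ : ℝ) := by exact_mod_cast hp.pos
  have hRHSnn : (0 : ℝ) ≤ (ℓ : ℝ) ^ (-(b : ℝ) / 2) * (Fintype.card V : ℝ) :=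
    mul_nonneg (Real.rpow_nonneg hℓpos.le _) (Nat.cast_nonneg _)
  refine le_of_pow_le_pow_left₀ (n := 2) two_ne_zero hRHSnn ?_
  have hsq : ((ℓ : ℝ) ^ (-(b : ℝ) / 2) * (Fintype.card V : ℝ)) ^ 2
      = ((ℓ : ℝ) ^ b)⁻¹ * (Fintype.card V : ℝ) ^ 2 := by
    rw [mul_pow, ← Real.rpow_natCast ((ℓ : ℝ) ^ (-(b : ℝ) / 2)) 2, ← Real.rpow_mul hℓpos.le]
    norm_num
  rw [hsq]
  have hA2 : ‖S‖ ^ 2 ≤ (Fintype.card V : ℝ) * K.card := by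
    rw [habsS]
    exact mul_le_mul_of_nonneg_left hsum_le (Nat.cast_nonneg _)
  have hKb : (K.card : ℝ) * (ℓ : ℝ) ^ b ≤ (Fintype.card V : ℝ) := by
    exact_mod_cast hKbound
  have hpow : (0 : ℝ) < (ℓ : ℝ) ^ b := pow_pos hℓpos b
  rw [inv_mul_eq_div, le_div_iff₀ hpow]
  calc ‖S‖ ^ 2 * (ℓ : ℝ) ^ b ≤ ((Fintype.card V : ℝ) * K.card) * (ℓ : ℝ) ^ b :=
        mul_le_mul_of_nonneg_right hA2 hpow.le
    _ = (Fintype.card V : ℝ) * ((K.card : ℝ) * (ℓ : ℝ) ^ b) := by ring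
    _ ≤ (Fintype.card V : ℝ) * (Fintype.card V : ℝ) :=
        mul_le_mul_of_nonneg_left hKb (Nat.cast_nonneg _)
    _ = (Fintype.card V : ℝ) ^ 2 := by ring
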